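/- arXiv:2306.13560 — 2 statements merged into one kernel-verified Lean document; each statement's English description precedes it below -/
import Mathlib

section
/- Let d ≥ 1, let p, q : Fin n → (Fin d → ℝ) be any two configurations, let i ∈ Fin n, and let τ be a (d+1)-element subset of Fin n with i ∉ τ. If for every j ∈ τ the signed volumes agree on the simplex obtained by replacing j with i, i.e. vol_{(τ \ {j}) ∪ {i}}(p) = vol_{(τ \ {j}) ∪ {i}}(q), then vol_τ(p) = vol_τ(q). -/
/-- The signed `d`-volume of the `(d+1)`-element simplex `σ ⊆ Fin n` at the configuration
`p : Fin n → Fin d → ℝ`.  Junk value `0` if `σ` does not have `d+1` elements. -/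
noncomputable def vol {n : ℕ} (d : ℕ) (σ : Finset (Fin n)) (p : Fin n → Fin d → ℝ) : ℝ :=
  if h : σ.card = d + 1 then
    Matrix.det
      ((Matrix.of (Fin.cons (fun _ => (1 : ℝ)) fun i j => p (σ.orderEmbOfFin h j) i) :
        Matrix (Fin (d + 1)) (Fin (d + 1)) ℝ))
  else 0

lemma key_sum (d n : ℕ) (p : Fin n → Fin d → ℝ) (σ : Finset (Fin n))
    (hσ : σ.card = d + 2) :
    ∑ k : Fin (d + 2), (-1 : ℝ) ^ (k : ℕ) * vol d (σ.erase (σ.orderEmbOfFin hσ k)) p = 0 := by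
  set e := σ.orderEmbOfFin hσ with he
  -- the matrix with a duplicated ones-row
  set M : Matrix (Fin (d + 2)) (Fin (d + 2)) ℝ :=
    Matrix.of (Fin.cons (fun _ => (1 : ℝ))
      (Fin.cons (fun _ => (1 : ℝ)) (fun r c => p (e c) r))) with hM
  have hdet : M.det = 0 := by
    apply Matrix.det_zero_of_row_eq (i := 0) (j := 1)
      (Fin.ne_of_val_ne (by simp))
    ext c
    simp [hM]
  rw [Matrix.det_succ_row_zero] at hdet
  rw [← hdet]
  apply Finset.sum_congr rfl
  intro k _
  have hcard : (σ.erase (e k)).card = d + 1 := by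
    rw [Finset.card_erase_of_mem (Finset.orderEmbOfFin_mem σ hσ k), hσ]
    omega
  have hemb : ∀ c : Fin (d + 1), (σ.erase (e k)).orderEmbOfFin hcard c = e (k.succAbove c) := by
    have := Finset.orderEmbOfFin_unique hcard
      (f := fun c : Fin (d + 1) => e (k.succAbove c))
      (fun c => Finset.mem_erase.2 ⟨by
          intro hc
          exact Fin.succAbove_ne k c ((σ.orderEmbOfFin (h := hσ)).injective hc), 
        Finset.orderEmbOfFin_mem σ hσ _⟩)
      (fun a b hab => (σ.orderEmbOfFin hσ).strictMono (Fin.strictMono_succAbove k hab))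
    intro c
    exact (congrFun this c).symm
  have : vol d (σ.erase (e k)) p =
      (M.submatrix Fin.succ k.succAbove).det := by
    rw [vol, dif_pos hcard]
    congr 1
    ext r c
    refine Fin.cases ?_ ?_ r
    · simp [hM]
    · intro r'
      simp [hM, hemb c]
  rw [this, hM]
  have : M 0 k = 1 := by simp [hM]
  rw [← hM]
  rw [this, mul_one]


/-- If two configurations `p, q` assign equal signed volumes to every simplex obtained
from `τ` by swapping one of its vertices `j` for the outside vertex `i`, then they assign
equal signed volumes to `τ` itself. -/
theorem vol_eq_of_swaps (d n : ℕ) (hd : 1 ≤ d) (p q : Fin n → Fin d → ℝ) (i : Fin n)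
    (τ : Finset (Fin n)) (hτ : τ.card = d + 1) (hiτ : i ∉ τ)
    (h : ∀ j ∈ τ, vol d (insert i (τ.erase j)) p = vol d (insert i (τ.erase j)) q) :
    vol d τ p = vol d τ q := by
  set σ := insert i τ with hσdef
  have hσ : σ.card = d + 2 := by
    rw [hσdef, Finset.card_insert_of_notMem hiτ, hτ]
  set e := σ.orderEmbOfFin hσ with he
  have hi : i ∈ σ := Finset.mem_insert_self i τ
  obtain ⟨k₀, hk₀⟩ : ∃ k, e k = i := by
    have := Finset.range_orderEmbOfFin σ hσ
    have : i ∈ Set.range e := by rw [he, this]; exact_mod_cast hi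
    exact this
  have key : ∀ r : Fin n → Fin d → ℝ,
      (-1 : ℝ) ^ (k₀ : ℕ) * vol d τ r +
        ∑ k ∈ Finset.univ.erase k₀, (-1 : ℝ) ^ (k : ℕ) * vol d (σ.erase (e k)) r = 0 := by
    intro r
    have h1 : σ.erase (e k₀) = τ := by
      rw [hk₀, hσdef, Finset.erase_insert hiτ]
    have hsum := key_sum d n r σ hσ
    rw [← Finset.add_sum_erase _ _ (Finset.mem_univ k₀)] at hsum
    simp only [← he] at hsum
    rwa [h1] at hsum
  have hswap : ∀ k ∈ Finset.univ.erase k₀,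
      (-1 : ℝ) ^ (k : ℕ) * vol d (σ.erase (e k)) p
        = (-1 : ℝ) ^ (k : ℕ) * vol d (σ.erase (e k)) q := by
    intro k hk
    have hkne : k ≠ k₀ := (Finset.mem_erase.1 hk).1
    have hek : e k ∈ τ := by
      have hm : e k ∈ σ := Finset.orderEmbOfFin_mem σ hσ k
      rcases Finset.mem_insert.1 hm with h1 | h1
      · exact absurd ((σ.orderEmbOfFin hσ).injective (h1.trans hk₀.symm)) hkne
      · exact h1
    have hne : i ≠ e k := fun hc => hiτ (hc ▸ hek)
    have : σ.erase (e k) = insert i (τ.erase (e k)) := by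
      rw [hσdef, Finset.erase_insert_of_ne hne]
    rw [this, h (e k) hek]
  have hp := key p
  have hq := key q
  rw [Finset.sum_congr rfl hswap] at hp
  have := hp.trans hq.symm
  have h2 : (-1 : ℝ) ^ (k₀ : ℕ) * vol d τ p = (-1 : ℝ) ^ (k₀ : ℕ) * vol d τ q := by
    linarith
  have hne : ((-1 : ℝ) ^ (k₀ : ℕ)) ≠ 0 := by positivity
  exact mul_left_cancel₀ hne h2
end

section
/- Let d ≥ 1 and let F be a family of (d+1)-element subsets of {1,…,n} that is independent in the d-volume rigidity matroid R_n^d. Then F supports no nonzero simplicial d-cycle over ℝ: if c : F → ℝ satisfies, for every d-element subset T of {1,…,n}, Σ_{σ ∈ F, T ⊆ σ} (−1)^{r(σ,T)} · c(σ) = 0, where r(σ,T) is the (0-indexed) position of the unique element of σ \ T in the increasing enumeration of σ, then c = 0. -/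
open Finset

/-- Auxiliary `d × d` coordinate minor associated to a `d`-element subset `T`. -/
noncomputable def volAux {n : ℕ} (d : ℕ) (T : Finset (Fin n)) (p : Fin n → Fin d → ℝ) : ℝ :=
  if h : T.card = d then
    Matrix.det ((Matrix.of fun (i : Fin d) (k : Fin d) => p (T.orderEmbOfFin h k) i :
      Matrix (Fin d) (Fin d) ℝ))
  else 0

lemma card_filter_lt_orderEmbOfFin {n d : ℕ} (σ : Finset (Fin n)) (h : σ.card = d)
    (j : Fin d) :
    (σ.filter fun y => y < σ.orderEmbOfFin h j).card = (j : ℕ) := by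
  classical
  have himg : (σ.filter fun y => y < σ.orderEmbOfFin h j)
      = (Finset.Iio j).image (σ.orderEmbOfFin h) := by
    ext y
    simp only [mem_filter, mem_image, mem_Iio]
    constructor
    · rintro ⟨hyσ, hlt⟩
      have : y ∈ Set.range (σ.orderEmbOfFin h) := by
        rw [Finset.range_orderEmbOfFin]; exact hyσ
      obtain ⟨k, hk⟩ := this
      refine ⟨k, ?_, hk⟩
      have := (σ.orderEmbOfFin h).strictMono.lt_iff_lt (a := k) (b := j)
      rw [← this]
      rw [hk]; exact hlt
    · rintro ⟨k, hkj, rfl⟩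
      exact ⟨Finset.orderEmbOfFin_mem σ h k, (σ.orderEmbOfFin h).strictMono hkj⟩
  rw [himg, Finset.card_image_of_injective _ (σ.orderEmbOfFin h).injective, Fin.card_Iio]

lemma orderEmbOfFin_erase {n d : ℕ} (σ : Finset (Fin n)) (h : σ.card = d + 1)
    (j : Fin (d + 1)) (h' : (σ.erase (σ.orderEmbOfFin h j)).card = d) (k : Fin d) :
    (σ.erase (σ.orderEmbOfFin h j)).orderEmbOfFin h' k
      = σ.orderEmbOfFin h (j.succAbove k) := by
  have huniq := Finset.orderEmbOfFin_unique h'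
    (f := fun k : Fin d => σ.orderEmbOfFin h (j.succAbove k))
    (fun k => Finset.mem_erase.2
      ⟨(σ.orderEmbOfFin h).injective.ne_iff.2 (Fin.succAbove_ne j k),
        Finset.orderEmbOfFin_mem σ h _⟩)
    ((σ.orderEmbOfFin h).strictMono.comp (Fin.strictMono_succAbove j))
  exact (congrFun huniq k).symm

/-- Laplace expansion of `vol` along the top row of ones. -/
lemma vol_laplace {n d : ℕ} (σ : Finset (Fin n)) (h : σ.card = d + 1)
    (p : Fin n → Fin d → ℝ) :
    vol d σ p
      = ∑ x ∈ σ, (-1 : ℝ) ^ ((σ.filter fun y => y < x).card) * volAux d (σ.erase x) p := by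
  classical
  rw [vol, dif_pos h, Matrix.det_succ_row_zero]
  refine Finset.sum_bij (fun (j : Fin (d + 1)) (_ : j ∈ Finset.univ) => σ.orderEmbOfFin h j)
    (fun j _ => Finset.orderEmbOfFin_mem σ h j)
    (fun j₁ _ j₂ _ hj => (σ.orderEmbOfFin h).injective hj)
    (fun x hx => ?_) (fun j _ => ?_)
  · have : x ∈ Set.range (σ.orderEmbOfFin h) := by
      rw [Finset.range_orderEmbOfFin]; exact hx
    obtain ⟨k, hk⟩ := this
    exact ⟨k, Finset.mem_univ k, hk⟩
  · have h0 : (Matrix.of (Fin.cons (fun _ => (1 : ℝ))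
        fun i j' => p (σ.orderEmbOfFin h j') i) :
          Matrix (Fin (d + 1)) (Fin (d + 1)) ℝ) 0 j = 1 := by
      simp [Matrix.of_apply, Fin.cons_zero]
    have herase : (σ.erase (σ.orderEmbOfFin h j)).card = d := by
      rw [Finset.card_erase_of_mem (Finset.orderEmbOfFin_mem σ h j), h]
      omega
    have hmat : ((Matrix.of (Fin.cons (fun _ => (1 : ℝ))
        fun i j' => p (σ.orderEmbOfFin h j') i) :
          Matrix (Fin (d + 1)) (Fin (d + 1)) ℝ).submatrix Fin.succ j.succAbove)
        = (Matrix.of fun (i : Fin d) (k : Fin d) =>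
            p ((σ.erase (σ.orderEmbOfFin h j)).orderEmbOfFin herase k) i :
          Matrix (Fin d) (Fin d) ℝ) := by
      ext i k
      simp only [Matrix.submatrix_apply, Matrix.of_apply, Fin.cons_succ]
      rw [orderEmbOfFin_erase σ h j herase k]
    rw [h0, hmat]
    rw [volAux, dif_pos herase]
    rw [card_filter_lt_orderEmbOfFin σ h j]
    ring

lemma vol_differentiable {n d : ℕ} (σ : Finset (Fin n)) :
    Differentiable ℝ (vol d σ) := by
  classical
  unfold vol
  by_cases h : σ.card = d + 1
  · simp only [dif_pos h, Matrix.det_apply']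
    refine Differentiable.fun_sum fun τ _ => ?_
    refine Differentiable.const_mul ?_ _
    have entry : ∀ r j : Fin (d + 1), Differentiable ℝ
        (fun p : Fin n → Fin d → ℝ =>
          (Matrix.of (Fin.cons (fun _ => (1 : ℝ))
            fun i j' => p (σ.orderEmbOfFin h j') i) :
              Matrix (Fin (d + 1)) (Fin (d + 1)) ℝ) r j) := by
      intro r j
      refine Fin.cases ?_ ?_ r
      · simp only [Matrix.of_apply, Fin.cons_zero]
        exact differentiable_const 1
      · intro i
        simp only [Matrix.of_apply, Fin.cons_succ]
        exact ((ContinuousLinearMap.proj (R := ℝ) (φ := fun _ : Fin d => ℝ) i).comp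
          (ContinuousLinearMap.proj (R := ℝ)
            (φ := fun _ : Fin n => (Fin d → ℝ)) (σ.orderEmbOfFin h j))).differentiable
    -- differentiability of the finite product
    intro p
    exact (HasFDerivAt.finset_prod
      (fun i _ => ((entry (τ i) i) p).hasFDerivAt)).differentiableAt
  · simp only [dif_neg h]
    exact differentiable_const 0

/-- The cycle condition forces the weighted sum of volumes to vanish identically. -/
lemma key_sum_vol {d n : ℕ} (F : Finset (Finset (Fin n)))
    (hcard : ∀ σ ∈ F, σ.card = d + 1) (c : Finset (Fin n) → ℝ)
    (hc : ∀ T : Finset (Fin n), T.card = d →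
      ∑ σ ∈ F.filter (fun σ => T ⊆ σ),
        (∑ x ∈ σ \ T, (-1 : ℝ) ^ ((σ.filter fun y => y < x).card)) * c σ = 0)
    (p : Fin n → Fin d → ℝ) :
    ∑ σ ∈ F, c σ * vol d σ p = 0 := by
  classical
  have step1 : ∑ σ ∈ F, c σ * vol d σ p
      = ∑ σ ∈ F, ∑ T ∈ σ.powersetCard d,
          (∑ x ∈ σ \ T, (-1 : ℝ) ^ ((σ.filter fun y => y < x).card)) * c σ * volAux d T p := by
    refine Finset.sum_congr rfl fun σ hσ => ?_
    rw [vol_laplace σ (hcard σ hσ) p, Finset.mul_sum]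
    refine Finset.sum_bij (fun (x : Fin n) (_ : x ∈ σ) => σ.erase x) ?_ ?_ ?_ ?_
    · intro x hx
      rw [Finset.mem_powersetCard]
      exact ⟨Finset.erase_subset x σ,
        by rw [Finset.card_erase_of_mem hx, hcard σ hσ]; omega⟩
    · intro x₁ hx₁ x₂ hx₂ hxe
      by_contra hne
      have h1 : x₁ ∈ σ.erase x₂ := Finset.mem_erase.2 ⟨hne, hx₁⟩
      rw [← hxe] at h1
      exact (Finset.mem_erase.1 h1).1 rfl
    · intro T hT
      rw [Finset.mem_powersetCard] at hT
      obtain ⟨hTσ, hTd⟩ := hT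
      have hsd : (σ \ T).card = 1 := by
        rw [Finset.card_sdiff_of_subset hTσ, hcard σ hσ, hTd]
        omega
      obtain ⟨x, hx⟩ := Finset.card_eq_one.1 hsd
      have hxσT : x ∈ σ \ T := hx ▸ Finset.mem_singleton_self x
      have hxσ : x ∈ σ := (Finset.mem_sdiff.1 hxσT).1
      have hxT : x ∉ T := (Finset.mem_sdiff.1 hxσT).2
      refine ⟨x, hxσ, ?_⟩
      apply Finset.Subset.antisymm
      · intro y hy
        obtain ⟨hyx, hyσ⟩ := Finset.mem_erase.1 hy
        by_contra hyT
        have : y ∈ σ \ T := Finset.mem_sdiff.2 ⟨hyσ, hyT⟩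
        rw [hx, Finset.mem_singleton] at this
        exact hyx this
      · intro y hy
        exact Finset.mem_erase.2 ⟨fun hyx => hxT (hyx ▸ hy), hTσ hy⟩
    · intro x hx
      have hsde : σ \ σ.erase x = {x} := Finset.sdiff_erase_self hx
      rw [hsde, Finset.sum_singleton]
      ring
  rw [step1]
  have step2 : ∑ σ ∈ F, ∑ T ∈ σ.powersetCard d,
      (∑ x ∈ σ \ T, (-1 : ℝ) ^ ((σ.filter fun y => y < x).card)) * c σ * volAux d T p
      = ∑ T ∈ (Finset.univ : Finset (Fin n)).powersetCard d,
          ∑ σ ∈ F.filter (fun σ => T ⊆ σ),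
            (∑ x ∈ σ \ T, (-1 : ℝ) ^ ((σ.filter fun y => y < x).card)) * c σ * volAux d T p := by
    refine Finset.sum_comm' ?_
    intro σ T
    simp only [Finset.mem_powersetCard, Finset.mem_filter, Finset.subset_univ, true_and]
    constructor
    · rintro ⟨hσF, hTσ, hTd⟩
      exact ⟨⟨hσF, hTσ⟩, hTd⟩
    · rintro ⟨⟨hσF, hTσ⟩, hTd⟩
      exact ⟨hσF, hTσ, hTd⟩
  rw [step2]
  refine Finset.sum_eq_zero fun T hT => ?_
  have hTd : T.card = d := (Finset.mem_powersetCard.1 hT).2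
  rw [← Finset.sum_mul, hc T hTd, zero_mul]

/-- A family independent in the `d`-volume rigidity matroid supports no nonzero simplicial
`d`-cycle over `ℝ`.  The coefficient `(∑ x ∈ σ \ T, (-1)^{#{y ∈ σ : y < x}})` equals
`(-1)^{r(σ,T)}` where `r(σ,T)` is the 0-indexed position, in the increasing enumeration of
`σ`, of the unique element of `σ \ T` (for `T ⊆ σ` with `|T| = d`, `|σ| = d+1`). -/
theorem no_nonzero_cycle_of_indep (d n : ℕ) (hd : 1 ≤ d)
    (F : Finset (Finset (Fin n))) (hcard : ∀ σ ∈ F, σ.card = d + 1)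
    (hindep : ∃ p : Fin n → Fin d → ℝ,
      LinearIndependent ℝ fun σ : F => fderiv ℝ (vol d σ.1) p)
    (c : Finset (Fin n) → ℝ)
    (hc : ∀ T : Finset (Fin n), T.card = d →
      ∑ σ ∈ F.filter (fun σ => T ⊆ σ),
        (∑ x ∈ σ \ T, (-1 : ℝ) ^ ((σ.filter fun y => y < x).card)) * c σ = 0) :
    ∀ σ ∈ F, c σ = 0 := by
  classical
  obtain ⟨p, hp⟩ := hindep
  have hkey : (fun q : Fin n → Fin d → ℝ => ∑ σ ∈ F, c σ * vol d σ q)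
      = fun _ => (0 : ℝ) := funext fun q => key_sum_vol F hcard c hc q
  have h0 : fderiv ℝ (fun q : Fin n → Fin d → ℝ => ∑ σ ∈ F, c σ * vol d σ q) p = 0 := by
    rw [hkey]
    exact fderiv_const_apply 0
  have hdiff : ∀ σ ∈ F, DifferentiableAt ℝ (fun q : Fin n → Fin d → ℝ => c σ * vol d σ q) p :=
    fun σ _ => ((vol_differentiable σ) p).const_mul _
  have h2 : ∑ σ ∈ F, c σ • fderiv ℝ (vol d σ) p = 0 := by
    calc ∑ σ ∈ F, c σ • fderiv ℝ (vol d σ) p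
        = ∑ σ ∈ F, fderiv ℝ (fun q : Fin n → Fin d → ℝ => c σ * vol d σ q) p :=
          Finset.sum_congr rfl fun σ _ =>
            (fderiv_const_mul ((vol_differentiable σ) p) (c σ)).symm
      _ = fderiv ℝ (fun q : Fin n → Fin d → ℝ => ∑ σ ∈ F, c σ * vol d σ q) p :=
          (fderiv_fun_sum hdiff).symm
      _ = 0 := h0
  have h3 : ∑ σ : {x // x ∈ F}, c σ.1 • fderiv ℝ (vol d σ.1) p = 0 := by
    rw [Finset.sum_coe_sort F (fun σ => c σ • fderiv ℝ (vol d σ) p)]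
    exact h2
  intro σ hσ
  exact Fintype.linearIndependent_iff.1 hp (fun σ => c σ.1) h3 ⟨σ, hσ⟩
end
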